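/- Let f : S^{p-1} → (0,∞) be a (almost everywhere positive) probability density with respect to the surface measure on the unit sphere. Define g(x) = ‖x‖ · f(x/‖x‖)^{-1/p} for x ∈ ℝᵖ \ {0}. Then g is positively homogeneous of degree 1, and for any star-shaped density of the form f_G(g(x)) (a probability density with respect to Lebesgue measure), the direction z' = x/‖x‖ of a random vector x with this density has exactly the distribution f(z') dz' on S^{p-1}. -/

import Mathlib

open MeasureTheory Set Metric
open scoped ENNReal

/-- Scaling a nonnegative integrand on `(0, ∞)`. -/
lemma scale_aux (fG : ℝ → ℝ) (hfG : Measurable fG) (n : ℕ) (c : ℝ) (hc : 0 < c) :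
    ∫⁻ r in Set.Ioi (0:ℝ), ENNReal.ofReal (r ^ n) * ENNReal.ofReal (fG (r * c)) =
    (ENNReal.ofReal (c ^ (n+1)))⁻¹ *
      ∫⁻ s in Set.Ioi (0:ℝ), ENNReal.ofReal (s ^ n) * ENNReal.ofReal (fG s) := by
  set Φ : ℝ → ℝ≥0∞ := fun s => ENNReal.ofReal (s ^ n) * ENNReal.ofReal (fG s) with hΦ
  have hΦm : Measurable Φ :=
    ((measurable_id.pow_const n).ennreal_ofReal).mul hfG.ennreal_ofReal
  have hmap : Measure.map (c * ·) volume = ENNReal.ofReal c⁻¹ • volume := by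
    rw [Real.map_volume_mul_left hc.ne', abs_of_pos (inv_pos.2 hc)]
  have key : ENNReal.ofReal c⁻¹ * ∫⁻ s in Set.Ioi (0:ℝ), Φ s =
      ∫⁻ r, (Set.Ioi (0:ℝ)).indicator Φ (c * r) := by
    have h := lintegral_map (μ := volume) (f := (Set.Ioi (0:ℝ)).indicator Φ)
      (hΦm.indicator measurableSet_Ioi) (measurable_const_mul c)
    rw [hmap, lintegral_smul_measure, lintegral_indicator measurableSet_Ioi] at h
    exact h
  have h2 : ∀ r : ℝ, (Set.Ioi (0:ℝ)).indicator Φ (c * r)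
      = (Set.Ioi (0:ℝ)).indicator (fun r => Φ (c * r)) r := by
    intro r
    by_cases hr : 0 < r
    · rw [Set.indicator_of_mem (Set.mem_Ioi.2 (mul_pos hc hr)),
        Set.indicator_of_mem (Set.mem_Ioi.2 hr)]
    · rw [Set.indicator_of_notMem (by
          simp only [Set.mem_Ioi]
          push_neg at hr ⊢
          exact mul_nonpos_of_nonneg_of_nonpos hc.le hr),
        Set.indicator_of_notMem (by simpa using hr)]
  have h3 : ∫⁻ r, (Set.Ioi (0:ℝ)).indicator Φ (c * r)
      = ∫⁻ r in Set.Ioi (0:ℝ), Φ (c * r) := by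
    simp_rw [h2]
    exact lintegral_indicator measurableSet_Ioi _
  have h4 : ∫⁻ r in Set.Ioi (0:ℝ), Φ (c * r)
      = ENNReal.ofReal (c ^ n) *
        ∫⁻ r in Set.Ioi (0:ℝ), ENNReal.ofReal (r ^ n) * ENNReal.ofReal (fG (r * c)) := by
    rw [← lintegral_const_mul' _ _ ENNReal.ofReal_ne_top]
    refine setLIntegral_congr_fun measurableSet_Ioi (fun r hr => ?_)
    simp only [hΦ]
    rw [mul_pow, ENNReal.ofReal_mul (pow_nonneg hc.le n), mul_comm c r]
    ring
  have hne : ENNReal.ofReal (c ^ n) ≠ 0 := (ENNReal.ofReal_pos.2 (pow_pos hc n)).ne'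
  have hnt : ENNReal.ofReal (c ^ n) ≠ ⊤ := ENNReal.ofReal_ne_top
  have heq : ENNReal.ofReal (c ^ n) *
      (∫⁻ r in Set.Ioi (0:ℝ), ENNReal.ofReal (r ^ n) * ENNReal.ofReal (fG (r * c)))
      = ENNReal.ofReal c⁻¹ * ∫⁻ s in Set.Ioi (0:ℝ), Φ s := by
    rw [key, h3, h4]
  calc ∫⁻ r in Set.Ioi (0:ℝ), ENNReal.ofReal (r ^ n) * ENNReal.ofReal (fG (r * c))
      = (ENNReal.ofReal (c ^ n))⁻¹ * (ENNReal.ofReal (c ^ n) *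
          ∫⁻ r in Set.Ioi (0:ℝ), ENNReal.ofReal (r ^ n) * ENNReal.ofReal (fG (r * c))) := by
        rw [← mul_assoc, ENNReal.inv_mul_cancel hne hnt, one_mul]
    _ = (ENNReal.ofReal (c ^ n))⁻¹ * (ENNReal.ofReal c⁻¹ * ∫⁻ s in Set.Ioi (0:ℝ), Φ s) := by
        rw [heq]
    _ = (ENNReal.ofReal (c ^ (n+1)))⁻¹ * ∫⁻ s in Set.Ioi (0:ℝ), Φ s := by
        rw [ENNReal.ofReal_inv_of_pos hc, ← mul_assoc,
          ← ENNReal.mul_inv (Or.inl hne) (Or.inl hnt),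
          ← ENNReal.ofReal_mul (pow_nonneg hc.le n), ← pow_succ]

/-- Given an (a.e.) positive probability density `f` on the unit sphere `S^{p-1}`,
the function `g(x) = ‖x‖ f(x/‖x‖)^{-1/p}` is positively homogeneous of degree 1, and
for any star-shaped probability density `f_G(g(x))`, the direction `z' = x/‖x‖` has
exactly the distribution `f(z') dz'` on the sphere. -/
theorem stmt18 (p : ℕ) (hp : 0 < p)
    (f : EuclideanSpace ℝ (Fin p) → ℝ) (hfmeas : Measurable f)
    (hfpos : ∀ u ∈ Metric.sphere (0 : EuclideanSpace ℝ (Fin p)) 1, 0 < f u)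
    (hfint : ∫ u : Metric.sphere (0 : EuclideanSpace ℝ (Fin p)) 1,
        f u.1 ∂(volume : Measure (EuclideanSpace ℝ (Fin p))).toSphere = 1)
    (g : EuclideanSpace ℝ (Fin p) → ℝ)
    (hg : ∀ x : EuclideanSpace ℝ (Fin p),
      g x = ‖x‖ * (f (‖x‖⁻¹ • x)) ^ (-(1 / (p : ℝ)))) :
    (∀ t : ℝ, 0 < t → ∀ x : EuclideanSpace ℝ (Fin p), x ≠ 0 →
      g (t • x) = t * g x) ∧
    (∀ fG : ℝ → ℝ, Measurable fG → (∀ t, 0 ≤ fG t) →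
      ∀ μ : Measure (EuclideanSpace ℝ (Fin p)),
        μ = volume.withDensity (fun x => ENNReal.ofReal (fG (g x))) →
        IsProbabilityMeasure μ →
        Measure.map (fun x => ‖x‖⁻¹ • x) μ =
          Measure.map Subtype.val
            (((volume : Measure (EuclideanSpace ℝ (Fin p))).toSphere).withDensity
              fun u => ENNReal.ofReal (f u.1))) := by
  haveI : Nonempty (Fin p) := ⟨⟨0, hp⟩⟩
  have hppos : (0:ℝ) < p := Nat.cast_pos.2 hp
  constructor
  · intro t ht x hx
    have hx' : ‖x‖ ≠ 0 := norm_ne_zero_iff.2 hx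
    have hnorm : ‖t • x‖ = t * ‖x‖ := by
      rw [norm_smul, Real.norm_eq_abs, abs_of_pos ht]
    have hdir : (t * ‖x‖)⁻¹ • (t • x) = ‖x‖⁻¹ • x := by
      rw [smul_smul]
      congr 1
      field_simp
    rw [hg, hg, hnorm, hdir]
    ring
  · intro fG hfGm hfGnn μ hμ hprob
    classical
    have hgmeas : Measurable g := by
      have hgeq : g = fun x => ‖x‖ * (f (‖x‖⁻¹ • x)) ^ (-(1 / (p:ℝ))) := funext hg
      rw [hgeq]
      exact measurable_norm.mul
        ((hfmeas.comp (measurable_norm.inv.smul measurable_id)).pow_const _)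
    have hdirm : Measurable (fun x : EuclideanSpace ℝ (Fin p) => ‖x‖⁻¹ • x) :=
      measurable_norm.inv.smul measurable_id
    set F : EuclideanSpace ℝ (Fin p) → ℝ≥0∞ := fun x => ENNReal.ofReal (fG (g x)) with hF
    have hFm : Measurable F := (hfGm.comp hgmeas).ennreal_ofReal
    set I : ℝ≥0∞ :=
      ∫⁻ s in Set.Ioi (0:ℝ), ENNReal.ofReal (s ^ (p-1)) * ENNReal.ofReal (fG s) with hI
    have hdim : Module.finrank ℝ (EuclideanSpace ℝ (Fin p)) = p := finrank_euclideanSpace_fin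
    -- The key computation
    have key : ∀ A : Set (EuclideanSpace ℝ (Fin p)), MeasurableSet A →
        μ ((fun x => ‖x‖⁻¹ • x) ⁻¹' A)
          = I * ∫⁻ z in Subtype.val ⁻¹' A, ENNReal.ofReal (f z.1)
              ∂(volume : Measure (EuclideanSpace ℝ (Fin p))).toSphere := by
      intro A hA
      set G : EuclideanSpace ℝ (Fin p) → ℝ≥0∞ :=
        ((fun x => ‖x‖⁻¹ • x) ⁻¹' A).indicator F with hG
      have hGm : Measurable G := hFm.indicator (hdirm hA)
      have h1 : μ ((fun x => ‖x‖⁻¹ • x) ⁻¹' A) = ∫⁻ x, G x := by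
        rw [hμ, withDensity_apply _ (hdirm hA), ← lintegral_indicator (hdirm hA)]
      have h2 : ∫⁻ x, G x
          = ∫⁻ x : ({0}ᶜ : Set (EuclideanSpace ℝ (Fin p))), G x.1
              ∂((volume : Measure (EuclideanSpace ℝ (Fin p))).comap Subtype.val) := by
        rw [lintegral_subtype_comap (measurableSet_singleton (0:EuclideanSpace ℝ (Fin p))).compl,
          restrict_compl_singleton]
      set h : Metric.sphere (0 : EuclideanSpace ℝ (Fin p)) 1 × Set.Ioi (0:ℝ) → ℝ≥0∞ :=
        fun w => G (w.2.1 • w.1.1) with hh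
      have hhm : Measurable h :=
        hGm.comp ((measurable_subtype_coe.comp measurable_snd).smul
          (measurable_subtype_coe.comp measurable_fst))
      have h3 : ∫⁻ x : ({0}ᶜ : Set (EuclideanSpace ℝ (Fin p))), G x.1
            ∂((volume : Measure (EuclideanSpace ℝ (Fin p))).comap Subtype.val)
          = ∫⁻ w, h w ∂(((volume : Measure (EuclideanSpace ℝ (Fin p))).toSphere).prod
              (Measure.volumeIoiPow (Module.finrank ℝ (EuclideanSpace ℝ (Fin p)) - 1))) := by
        rw [← (Measure.measurePreserving_homeomorphUnitSphereProd
          (volume : Measure (EuclideanSpace ℝ (Fin p)))).lintegral_comp hhm]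
        refine lintegral_congr fun x => ?_
        have hx : x.1 ≠ 0 := x.2
        show G x.1 = G ((homeomorphUnitSphereProd _ x).2.1 • (homeomorphUnitSphereProd _ x).1.1)
        rw [homeomorphUnitSphereProd_apply_snd_coe, homeomorphUnitSphereProd_apply_fst_coe]
        rw [smul_inv_smul₀ (norm_ne_zero_iff.2 hx)]
      have h4 : ∫⁻ w, h w ∂(((volume : Measure (EuclideanSpace ℝ (Fin p))).toSphere).prod
            (Measure.volumeIoiPow (Module.finrank ℝ (EuclideanSpace ℝ (Fin p)) - 1)))
          = ∫⁻ z, ∫⁻ r, h (z, r)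
              ∂(Measure.volumeIoiPow (Module.finrank ℝ (EuclideanSpace ℝ (Fin p)) - 1))
              ∂(volume : Measure (EuclideanSpace ℝ (Fin p))).toSphere :=
        lintegral_prod _ hhm.aemeasurable
      have hinner : ∀ z : Metric.sphere (0 : EuclideanSpace ℝ (Fin p)) 1,
          ∫⁻ r, h (z, r)
              ∂(Measure.volumeIoiPow (Module.finrank ℝ (EuclideanSpace ℝ (Fin p)) - 1))
            = (Subtype.val ⁻¹' A).indicator
                (fun z : Metric.sphere (0 : EuclideanSpace ℝ (Fin p)) 1 =>
                  ENNReal.ofReal (f z.1) * I) z := by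
        intro z
        have hz1 : ‖z.1‖ = 1 := by
          have := z.2
          rwa [mem_sphere_zero_iff_norm] at this
        have hfz : 0 < f z.1 := hfpos z.1 z.2
        set c : ℝ := (f z.1) ^ (-(1/(p:ℝ))) with hc
        have hcpos : 0 < c := Real.rpow_pos_of_pos hfz _
        have hGz : ∀ r : Set.Ioi (0:ℝ),
            h (z, r) = if z.1 ∈ A then ENNReal.ofReal (fG (r.1 * c)) else 0 := by
          intro r
          have hr : (0:ℝ) < r.1 := r.2
          have hnorm : ‖r.1 • z.1‖ = r.1 := by
            rw [norm_smul, hz1, mul_one, Real.norm_eq_abs, abs_of_pos hr]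
          have hdir : ‖r.1 • z.1‖⁻¹ • (r.1 • z.1) = z.1 := by
            rw [hnorm, inv_smul_smul₀ hr.ne']
          have hgz : g (r.1 • z.1) = r.1 * c := by
            rw [hg, hnorm, inv_smul_smul₀ hr.ne']
          have hmem : (r.1 • z.1 ∈ (fun x => ‖x‖⁻¹ • x) ⁻¹' A) ↔ z.1 ∈ A := by
            simp only [Set.mem_preimage]
            rw [hdir]
          show G (r.1 • z.1) = _
          rw [hG, Set.indicator_apply]
          by_cases hzA : z.1 ∈ A
          · rw [if_pos (hmem.2 hzA), if_pos hzA]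
            show ENNReal.ofReal (fG (g (r.1 • z.1))) = ENNReal.ofReal (fG (r.1 * c))
            rw [hgz]
          · rw [if_neg (fun hmm => hzA (hmem.1 hmm)), if_neg hzA]
        by_cases hzA : z.1 ∈ A
        · have hGz' : ∀ r : Set.Ioi (0:ℝ), h (z, r) = ENNReal.ofReal (fG (r.1 * c)) := by
            intro r; rw [hGz r, if_pos hzA]
          rw [Set.indicator_of_mem (by simpa [Set.mem_preimage] using hzA)]
          calc ∫⁻ r, h (z, r)
                ∂(Measure.volumeIoiPow (Module.finrank ℝ (EuclideanSpace ℝ (Fin p)) - 1))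
              = ∫⁻ r : Set.Ioi (0:ℝ), ENNReal.ofReal (fG (r.1 * c))
                  ∂(Measure.volumeIoiPow (Module.finrank ℝ (EuclideanSpace ℝ (Fin p)) - 1)) :=
                lintegral_congr hGz'
            _ = ∫⁻ r : Set.Ioi (0:ℝ),
                  ENNReal.ofReal (r.1 ^ (Module.finrank ℝ (EuclideanSpace ℝ (Fin p)) - 1)) *
                    ENNReal.ofReal (fG (r.1 * c))
                  ∂(Measure.comap Subtype.val volume) := by
                have hwm : Measurable (fun r : Set.Ioi (0:ℝ) =>
                    ENNReal.ofReal (r.1 ^ (Module.finrank ℝ (EuclideanSpace ℝ (Fin p)) - 1))) :=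
                  (measurable_subtype_coe.pow_const _).ennreal_ofReal
                have hgm2 : Measurable (fun r : Set.Ioi (0:ℝ) =>
                    ENNReal.ofReal (fG (r.1 * c))) := by
                  exact (hfGm.comp (measurable_subtype_coe.mul_const c)).ennreal_ofReal
                rw [Measure.volumeIoiPow, lintegral_withDensity_eq_lintegral_mul _ hwm hgm2]
                rfl
            _ = ∫⁻ r in Set.Ioi (0:ℝ),
                  ENNReal.ofReal (r ^ (p - 1)) * ENNReal.ofReal (fG (r * c)) := by
                rw [hdim]
                exact lintegral_subtype_comap measurableSet_Ioi
                  (fun r : ℝ => ENNReal.ofReal (r ^ (p - 1)) * ENNReal.ofReal (fG (r * c)))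
            _ = (ENNReal.ofReal (c ^ (p - 1 + 1)))⁻¹ * I := by
                rw [scale_aux fG hfGm (p-1) c hcpos, hI]
            _ = ENNReal.ofReal (f z.1) * I := by
                congr 1
                rw [Nat.sub_add_cancel hp]
                have hcp : c ^ p = (f z.1)⁻¹ := by
                  rw [hc, ← Real.rpow_natCast ((f z.1) ^ (-(1/(p:ℝ)))) p,
                    ← Real.rpow_mul hfz.le]
                  rw [show (-(1/(p:ℝ))) * p = -1 by field_simp]
                  exact Real.rpow_neg_one _
                rw [hcp, ENNReal.ofReal_inv_of_pos hfz, inv_inv]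
        · have hGz' : ∀ r : Set.Ioi (0:ℝ), h (z, r) = 0 := by
            intro r; rw [hGz r, if_neg hzA]
          rw [Set.indicator_of_notMem (by simpa [Set.mem_preimage] using hzA)]
          rw [lintegral_congr hGz', lintegral_zero]
      calc μ ((fun x => ‖x‖⁻¹ • x) ⁻¹' A)
          = ∫⁻ z, (Subtype.val ⁻¹' A).indicator
              (fun z : Metric.sphere (0 : EuclideanSpace ℝ (Fin p)) 1 =>
                ENNReal.ofReal (f z.1) * I) z
              ∂(volume : Measure (EuclideanSpace ℝ (Fin p))).toSphere := by
            rw [h1, h2, h3, h4]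
            exact lintegral_congr hinner
        _ = ∫⁻ z in Subtype.val ⁻¹' A, ENNReal.ofReal (f z.1) * I
              ∂(volume : Measure (EuclideanSpace ℝ (Fin p))).toSphere :=
            lintegral_indicator (measurable_subtype_coe hA) _
        _ = (∫⁻ z in Subtype.val ⁻¹' A, ENNReal.ofReal (f z.1)
              ∂(volume : Measure (EuclideanSpace ℝ (Fin p))).toSphere) * I :=
            lintegral_mul_const _ ((hfmeas.comp measurable_subtype_coe).ennreal_ofReal)
        _ = I * ∫⁻ z in Subtype.val ⁻¹' A, ENNReal.ofReal (f z.1)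
              ∂(volume : Measure (EuclideanSpace ℝ (Fin p))).toSphere := mul_comm _ _
    -- total mass of the sphere density
    have hint : Integrable (fun u : Metric.sphere (0 : EuclideanSpace ℝ (Fin p)) 1 => f u.1)
        (volume : Measure (EuclideanSpace ℝ (Fin p))).toSphere := by
      by_contra hcon
      rw [integral_undef hcon] at hfint
      exact one_ne_zero hfint.symm
    have hL : ∫⁻ u, ENNReal.ofReal (f u.1)
        ∂(volume : Measure (EuclideanSpace ℝ (Fin p))).toSphere = 1 := by
      have := ofReal_integral_eq_lintegral_ofReal hint
        (Filter.Eventually.of_forall fun u => (hfpos u.1 u.2).le)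
      rw [hfint] at this
      simpa using this.symm
    have hIone : I = 1 := by
      have h := key Set.univ MeasurableSet.univ
      rw [Set.preimage_univ, Set.preimage_univ, Measure.restrict_univ, hL, mul_one] at h
      rw [← h, hprob.measure_univ]
    refine Measure.ext fun A hA => ?_
    rw [Measure.map_apply hdirm hA, Measure.map_apply measurable_subtype_coe hA,
      key A hA, hIone, one_mul, withDensity_apply _ (measurable_subtype_coe hA)]
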